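/- arXiv:2605.00126 — 4 statements merged into one kernel-verified Lean document; each statement's English description precedes it below -/
import Mathlib

section
/- Let γ > 0, ε ∈ [0, 1/2), α* ∈ ℝ, T ≥ 1 a natural number, and let e : ℕ → ℝ and α : ℕ → ℝ satisfy α_{t+1} = α_t + γ·(α* − e_t) for all t with 1 ≤ t ≤ T. If α_1 ∈ [ε, 1−ε] and α_{T+1} ∈ [ε, 1−ε], then |(1/T)·Σ_{t=1}^{T} e_t − α*| ≤ (1 − 2ε)/(γ·T). -/
/-- Finite-sample ACI coverage bound (Gibbs & Candès): if the levels follow the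
ACI update and both `α 1` and `α (T+1)` lie in `[ε, 1-ε]`, then the empirical
miscoverage frequency deviates from the target by at most `(1 - 2ε)/(γ T)`. -/
theorem aci_finite_sample_bound (γ ε αstar : ℝ) (hγ : 0 < γ)
    (hε0 : 0 ≤ ε) (hε1 : ε < 1 / 2) (T : ℕ) (hT : 1 ≤ T)
    (e α : ℕ → ℝ)
    (hupd : ∀ t, 1 ≤ t → t ≤ T → α (t + 1) = α t + γ * (αstar - e t))
    (h1 : α 1 ∈ Set.Icc ε (1 - ε)) (hT1 : α (T + 1) ∈ Set.Icc ε (1 - ε)) :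
    |(1 / (T : ℝ)) * ∑ t ∈ Finset.Icc 1 T, e t - αstar| ≤ (1 - 2 * ε) / (γ * T) := by
  have htel : ∀ n, n ≤ T →
      α (n + 1) = α 1 + γ * ((n : ℝ) * αstar - ∑ t ∈ Finset.Icc 1 n, e t) := by
    intro n hn
    induction n with
    | zero => simp
    | succ k ih =>
      have hk : k ≤ T := Nat.le_of_succ_le hn
      have h1k : 1 ≤ k + 1 := Nat.succ_le_succ (Nat.zero_le k)
      rw [hupd (k + 1) h1k hn, ih hk,
        Finset.sum_Icc_succ_top h1k]
      push_cast
      ring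
  have key := htel T le_rfl
  have hTpos : (0 : ℝ) < T := by exact_mod_cast hT
  have hγT : 0 < γ * T := mul_pos hγ hTpos
  have hdiff : (1 / (T : ℝ)) * ∑ t ∈ Finset.Icc 1 T, e t - αstar
      = (α 1 - α (T + 1)) / (γ * T) := by
    rw [key]
    field_simp
    ring
  rw [hdiff, abs_div, abs_of_pos hγT, div_le_div_iff_of_pos_right hγT]
  obtain ⟨ha, hb⟩ := h1
  obtain ⟨hc, hd⟩ := hT1
  rw [abs_le]
  constructor <;> linarith
end

section
/- Let γ > 0, ε ∈ [0, 1/2), α* ∈ ℝ, and let e : ℕ → ℝ and α : ℕ → ℝ satisfy α_{t+1} = α_t + γ·(α* − e_t) for all t ≥ 1, with α_t ∈ [ε, 1−ε] for all t ≥ 1. Then the empirical miscoverage frequency converges to the target: (1/T)·Σ_{t=1}^{T} e_t → α* as T → ∞. -/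
open Filter

/-- Asymptotic ACI coverage guarantee: if the levels follow the ACI update for all
`t ≥ 1` and remain in `[ε, 1-ε]`, then the empirical miscoverage frequency
converges to the target `αstar`. -/
theorem aci_asymptotic_coverage (γ ε αstar : ℝ) (hγ : 0 < γ)
    (hε0 : 0 ≤ ε) (hε1 : ε < 1 / 2)
    (e α : ℕ → ℝ)
    (hupd : ∀ t, 1 ≤ t → α (t + 1) = α t + γ * (αstar - e t))
    (hbound : ∀ t, 1 ≤ t → α t ∈ Set.Icc ε (1 - ε)) :
    Tendsto (fun T : ℕ => (1 / (T : ℝ)) * ∑ t ∈ Finset.Icc 1 T, e t)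
      atTop (nhds αstar) := by
  -- telescoping identity
  have tele : ∀ T : ℕ, γ * (αstar * T - ∑ t ∈ Finset.Icc 1 T, e t)
      = α (T + 1) - α 1 := by
    intro T
    induction T with
    | zero => simp
    | succ n ih =>
      rw [Finset.sum_Icc_succ_top (by omega)]
      have h := hupd (n + 1) (by omega)
      push_cast
      push_cast at ih
      rw [h]
      ring_nf
      ring_nf at ih
      linarith
  have heq : ∀ T : ℕ, 1 ≤ T →
      (1 / (T : ℝ)) * ∑ t ∈ Finset.Icc 1 T, e t
        = αstar - (α (T + 1) - α 1) / (γ * T) := by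
    intro T hT
    have hT0 : (0 : ℝ) < (T : ℝ) := by exact_mod_cast hT
    have h := tele T
    field_simp
    nlinarith [h]
  have hlim : Tendsto (fun T : ℕ => αstar - (α (T + 1) - α 1) / (γ * T))
      atTop (nhds αstar) := by
    have h0 : Tendsto (fun T : ℕ => (α (T + 1) - α 1) / (γ * T)) atTop (nhds 0) := by
      apply squeeze_zero_norm' (a := fun T : ℕ => (1 / γ) * (1 / (T : ℝ)))
      · filter_upwards [eventually_ge_atTop 1] with T hT
        have hT0 : (0 : ℝ) < (T : ℝ) := by exact_mod_cast hT
        have hb1 := hbound (T + 1) (by omega)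
        have hb2 := hbound 1 (by omega)
        simp only [Set.mem_Icc] at hb1 hb2
        rw [div_eq_mul_inv, norm_mul]
        have h1 : ‖α (T + 1) - α 1‖ ≤ 1 := by
          rw [Real.norm_eq_abs, abs_le]; constructor <;> nlinarith
        have h2 : ‖(γ * (T : ℝ))⁻¹‖ = 1 / γ * (1 / (T : ℝ)) := by
          rw [Real.norm_eq_abs, abs_of_pos (by positivity), mul_inv]
          ring
        calc ‖α (T + 1) - α 1‖ * ‖(γ * (T : ℝ))⁻¹‖
            ≤ 1 * (1 / γ * (1 / (T : ℝ))) := by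
              apply mul_le_mul h1 (le_of_eq h2) (norm_nonneg _) zero_le_one
          _ = 1 / γ * (1 / (T : ℝ)) := by ring
      · have := tendsto_one_div_atTop_nhds_zero_nat (𝕜 := ℝ)
        have := this.const_mul (1 / γ)
        simpa using this
    have := (tendsto_const_nhds (x := αstar) (f := atTop (α := ℕ))).sub h0
    simpa using this
  apply hlim.congr'
  filter_upwards [eventually_ge_atTop 1] with T hT
  exact (heq T hT).symm
end

section
/- Let γ > 0, ε ∈ [0, 1/2), α* ∈ ℝ, and for each t let err_t = 1 if y_t ∉ [l_t, u_t] and err_t = 0 otherwise, where y_t ∈ ℝ and [l_t, u_t] are the ACI prediction intervals. Suppose the ACI levels satisfy α_{t+1} = α_t + γ·(α* − err_t) for all t ≥ 1 with α_t ∈ [ε, 1−ε] for all t ≥ 1. Then the empirical coverage frequency converges: (1/T)·Σ_{t=1}^{T} 1{y_t ∈ [l_t, u_t]} → 1 − α* as T → ∞. -/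
open Filter

/-- Asymptotic ACI coverage guarantee in terms of the prediction intervals:
with `err t = 1` if `y t ∉ [l t, u t]` and `0` otherwise, if the levels follow
the ACI update and remain in `[ε, 1-ε]`, then the empirical coverage frequency
converges to `1 - αstar`. -/
theorem aci_empirical_coverage (γ ε αstar : ℝ) (hγ : 0 < γ)
    (hε0 : 0 ≤ ε) (hε1 : ε < 1 / 2)
    (y l u : ℕ → ℝ) (err α : ℕ → ℝ)
    (herr : ∀ t, err t = if y t ∈ Set.Icc (l t) (u t) then (0 : ℝ) else 1)
    (hupd : ∀ t, 1 ≤ t → α (t + 1) = α t + γ * (αstar - err t))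
    (hbound : ∀ t, 1 ≤ t → α t ∈ Set.Icc ε (1 - ε)) :
    Tendsto
      (fun T : ℕ =>
        (1 / (T : ℝ)) *
          ∑ t ∈ Finset.Icc 1 T, (if y t ∈ Set.Icc (l t) (u t) then (1 : ℝ) else 0))
      atTop (nhds (1 - αstar)) := by
  -- telescoped identity
  have key : ∀ T : ℕ, α (T + 1) = α 1 + γ * ((T : ℝ) * αstar - ∑ t ∈ Finset.Icc 1 T, err t) := by
    intro T
    induction T with
    | zero => simp
    | succ n ih =>
      rw [hupd (n + 1) (Nat.le_add_left 1 n), ih,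
        Finset.sum_Icc_succ_top (Nat.le_add_left 1 n)]
      push_cast
      ring
  -- indicator = 1 - err
  have hind : ∀ T : ℕ,
      (∑ t ∈ Finset.Icc 1 T, (if y t ∈ Set.Icc (l t) (u t) then (1 : ℝ) else 0))
        = (T : ℝ) - ∑ t ∈ Finset.Icc 1 T, err t := by
    intro T
    have : ∀ t, (if y t ∈ Set.Icc (l t) (u t) then (1 : ℝ) else 0) = 1 - err t := by
      intro t; rw [herr t]; split <;> ring
    simp only [this, Finset.sum_sub_distrib, Finset.sum_const, Nat.card_Icc,
      nsmul_eq_mul, mul_one]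
    simp
  -- rewrite the sequence
  have heq : ∀ T : ℕ,
      (1 / (T : ℝ)) *
          ∑ t ∈ Finset.Icc 1 T, (if y t ∈ Set.Icc (l t) (u t) then (1 : ℝ) else 0)
        = (1 / (T : ℝ)) * ((T : ℝ) * (1 - αstar) + (α (T + 1) - α 1) / γ) := by
    intro T
    rw [hind T]
    have hS : (∑ t ∈ Finset.Icc 1 T, err t)
        = (T : ℝ) * αstar - (α (T + 1) - α 1) / γ := by
      have := key T
      field_simp at this ⊢
      linarith [this]
    rw [hS]; ring
  simp only [heq]
  -- split into main term + error term
  have h1 : Tendsto (fun T : ℕ => (1 - αstar) + (α (T + 1) - α 1) / γ * (1 / (T : ℝ)))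
      atTop (nhds (1 - αstar)) := by
    have hz : Tendsto (fun T : ℕ => (α (T + 1) - α 1) / γ * (1 / (T : ℝ)))
        atTop (nhds 0) := by
      apply squeeze_zero_norm (a := fun T : ℕ => (1 / γ) * (1 / (T : ℝ)))
      · intro T
        rcases hbound (T + 1) (Nat.le_add_left 1 T) with ⟨h1a, h1b⟩
        rcases hbound 1 le_rfl with ⟨h2a, h2b⟩
        rw [norm_mul, norm_div]
        have hb : ‖α (T + 1) - α 1‖ ≤ 1 := by
          rw [Real.norm_eq_abs, abs_sub_le_iff]; constructor <;> linarith
        have hn : ‖(1 : ℝ) / (T : ℝ)‖ = 1 / (T : ℝ) := by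
          rw [Real.norm_eq_abs, abs_of_nonneg]; positivity
        rw [hn, Real.norm_eq_abs (γ), abs_of_pos hγ]
        have : ‖α (T + 1) - α 1‖ / γ ≤ 1 / γ := by gcongr
        exact mul_le_mul_of_nonneg_right this (by positivity)
      · have : Tendsto (fun T : ℕ => (1 : ℝ) / (T : ℝ)) atTop (nhds 0) :=
          tendsto_one_div_atTop_nhds_zero_nat
        simpa using this.const_mul (1 / γ)
    simpa using (tendsto_const_nhds (x := (1 - αstar)) (f := atTop)).add hz
  apply h1.congr'
  filter_upwards [eventually_ne_atTop 0] with T hT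
  have hT' : (T : ℝ) ≠ 0 := Nat.cast_ne_zero.mpr hT
  field_simp
end

section
/- Let X and X' be independent, identically distributed, integrable real random variables on a probability space, let F(x) = P(X ≤ x) be their common CDF, and let y ∈ ℝ. Then ∫_ℝ (F(x) − 1{y ≤ x})² dx = E|X − y| − (1/2)·E|X − X'|. -/
open MeasureTheory ProbabilityTheory

lemma indAbs (a b : ℝ) :
    (fun x => |(if a ≤ x then (1:ℝ) else 0) - (if b ≤ x then 1 else 0)|)
      = (Set.Ico (min a b) (max a b)).indicator (fun _ => (1:ℝ)) := by
  funext x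
  rcases le_or_gt a x with h1 | h1 <;> rcases le_or_gt b x with h2 | h2
  · rw [Set.indicator_of_notMem (by simp only [Set.mem_Ico, not_and, not_lt]; exact fun _ => max_le h1 h2)]
    simp [h1, h2]
  · rw [Set.indicator_of_mem (Set.mem_Ico.2 ⟨le_trans (min_le_left a b) h1, lt_max_iff.2 (Or.inr h2)⟩)]
    simp [h1, not_le.2 h2]
  · rw [Set.indicator_of_mem (Set.mem_Ico.2 ⟨le_trans (min_le_right a b) h2, lt_max_iff.2 (Or.inl h1)⟩)]
    simp [h2, not_le.2 h1]
  · rw [Set.indicator_of_notMem (by simp only [Set.mem_Ico, not_and, not_lt]; exact fun h => absurd h (not_le.2 (lt_min h1 h2)))]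
    simp [not_le.2 h1, not_le.2 h2]

lemma intA (a b : ℝ) :
    ∫ x, |(if a ≤ x then (1:ℝ) else 0) - (if b ≤ x then 1 else 0)| = |a - b| := by
  rw [indAbs, MeasureTheory.integral_indicator_const _ measurableSet_Ico, measureReal_def, Real.volume_Ico,
    smul_eq_mul, mul_one, ENNReal.toReal_ofReal (by simp)]
  exact (max_sub_min_eq_abs a b).trans (abs_sub_comm b a)

-- section integrability over x (Lebesgue) of the indicator-difference
lemma intableA (a b : ℝ) :
    Integrable (fun x => |(if a ≤ x then (1:ℝ) else 0) - (if b ≤ x then 1 else 0)|) := by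
  rw [indAbs]
  rw [integrable_indicator_iff measurableSet_Ico]
  exact integrableOn_const measure_Ico_lt_top.ne

section Main
variable {Ω : Type*} [MeasureSpace Ω] [IsProbabilityMeasure (ℙ : Measure Ω)]

-- measurability of (ω, x) ↦ if Z ω ≤ x then 1 else 0
lemma measInd {Z : Ω → ℝ} (hZ : Measurable Z) :
    Measurable (fun p : Ω × ℝ => if Z p.1 ≤ p.2 then (1:ℝ) else 0) :=
  Measurable.ite (measurableSet_le (hZ.comp measurable_fst) measurable_snd)
    measurable_const measurable_const

lemma measIndY (y : ℝ) :
    Measurable (fun p : Ω × ℝ => if y ≤ p.2 then (1:ℝ) else 0) :=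
  Measurable.ite (measurableSet_le measurable_const measurable_snd)
    measurable_const measurable_const

-- product integrability of the general indicator difference
lemma intProd {Z : Ω → ℝ} (g : Ω → ℝ) (hZ : Measurable Z)
    (hmg : Measurable (fun p : Ω × ℝ => if g p.1 ≤ p.2 then (1:ℝ) else 0))
    (habs : Integrable (fun ω => |Z ω - g ω|)) :
    Integrable (fun p : Ω × ℝ =>
      |(if Z p.1 ≤ p.2 then (1:ℝ) else 0) - (if g p.1 ≤ p.2 then 1 else 0)|)
      ((ℙ : Measure Ω).prod volume) := by
  have hm : AEStronglyMeasurable (fun p : Ω × ℝ =>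
      |(if Z p.1 ≤ p.2 then (1:ℝ) else 0) - (if g p.1 ≤ p.2 then 1 else 0)|)
      ((ℙ : Measure Ω).prod volume) :=
    (((measInd hZ).sub hmg).abs).aestronglyMeasurable
  rw [integrable_prod_iff hm]
  constructor
  · exact Filter.Eventually.of_forall fun ω => intableA (Z ω) (g ω)
  · have : (fun ω => ∫ x, ‖|(if Z ω ≤ x then (1:ℝ) else 0) - (if g ω ≤ x then 1 else 0)|‖)
        = fun ω => |Z ω - g ω| := by
      funext ω
      simp only [Real.norm_eq_abs, abs_abs]
      exact intA (Z ω) (g ω)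
    rw [this]
    exact habs
end Main

section Main2
variable {Ω : Type*} [MeasureSpace Ω] [IsProbabilityMeasure (ℙ : Measure Ω)]

lemma intIndSet {Z : Ω → ℝ} (hZ : Measurable Z) (x : ℝ) :
    ∫ ω, (if Z ω ≤ x then (1:ℝ) else 0) = (ℙ (Z ⁻¹' Set.Iic x)).toReal := by
  have h : (fun ω => if Z ω ≤ x then (1:ℝ) else 0)
      = (Z ⁻¹' Set.Iic x).indicator (fun _ => (1:ℝ)) := by
    funext ω; by_cases h : Z ω ≤ x <;> simp [h, Set.indicator_apply]
  rw [h, integral_indicator_const _ (hZ measurableSet_Iic), smul_eq_mul, mul_one, measureReal_def]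

lemma intableIndSet {Z : Ω → ℝ} (hZ : Measurable Z) (x : ℝ) :
    Integrable (fun ω => if Z ω ≤ x then (1:ℝ) else 0) := by
  have h : (fun ω => if Z ω ≤ x then (1:ℝ) else 0)
      = (Z ⁻¹' Set.Iic x).indicator (fun _ => (1:ℝ)) := by
    funext ω; by_cases h : Z ω ≤ x <;> simp [h, Set.indicator_apply]
  rw [h]
  exact (integrable_const 1).indicator (hZ measurableSet_Iic)

-- Step C
lemma stepC {X : Ω → ℝ} (hmeas : Measurable X) (y x : ℝ) :
    ∫ ω, |(if X ω ≤ x then (1:ℝ) else 0) - (if y ≤ x then 1 else 0)|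
      = (if y ≤ x then 1 - (ℙ (X ⁻¹' Set.Iic x)).toReal else (ℙ (X ⁻¹' Set.Iic x)).toReal) := by
  by_cases hy : y ≤ x
  · simp only [hy, if_true]
    have h : (fun ω => |(if X ω ≤ x then (1:ℝ) else 0) - 1|)
        = fun ω => 1 - (if X ω ≤ x then (1:ℝ) else 0) := by
      funext ω; by_cases h : X ω ≤ x <;> simp [h]
    rw [h, integral_sub (integrable_const 1) (intableIndSet hmeas x), integral_const,
      intIndSet hmeas x]
    simp
  · simp only [hy, if_false, sub_zero]
    have h : (fun ω => |(if X ω ≤ x then (1:ℝ) else 0)|)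
        = fun ω => (if X ω ≤ x then (1:ℝ) else 0) := by
      funext ω; by_cases h : X ω ≤ x <;> simp [h]
    rw [h, intIndSet hmeas x]

-- Step D
lemma stepD {X X' : Ω → ℝ} (hmeas : Measurable X) (hmeas' : Measurable X')
    (hindep : IndepFun X X') (hident : Measure.map X ℙ = Measure.map X' ℙ) (x : ℝ) :
    ∫ ω, |(if X ω ≤ x then (1:ℝ) else 0) - (if X' ω ≤ x then 1 else 0)|
      = 2 * (ℙ (X ⁻¹' Set.Iic x)).toReal - 2 * (ℙ (X ⁻¹' Set.Iic x)).toReal ^ 2 := by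
  set A : Set Ω := X ⁻¹' Set.Iic x with hA
  set B : Set Ω := X' ⁻¹' Set.Iic x with hB
  have hAm : MeasurableSet A := hmeas measurableSet_Iic
  have hBm : MeasurableSet B := hmeas' measurableSet_Iic
  have hfun : (fun ω => |(if X ω ≤ x then (1:ℝ) else 0) - (if X' ω ≤ x then 1 else 0)|)
      = fun ω => (A \ B).indicator (fun _ => (1:ℝ)) ω + (B \ A).indicator (fun _ => (1:ℝ)) ω := by
    funext ω
    have hmemA : ω ∈ A ↔ X ω ≤ x := Iff.rfl
    have hmemB : ω ∈ B ↔ X' ω ≤ x := Iff.rfl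
    by_cases h1 : X ω ≤ x <;> by_cases h2 : X' ω ≤ x <;>
      simp [Set.indicator_apply, Set.mem_diff, hmemA, hmemB, h1, h2]
  rw [hfun, integral_add ((integrable_const 1).indicator (hAm.diff hBm))
      ((integrable_const 1).indicator (hBm.diff hAm)),
    integral_indicator_const _ (hAm.diff hBm), integral_indicator_const _ (hBm.diff hAm),
    smul_eq_mul, smul_eq_mul, mul_one, mul_one]
  have hBA : ℙ B = ℙ A := by
    rw [hA, hB, ← Measure.map_apply hmeas measurableSet_Iic,
      ← Measure.map_apply hmeas' measurableSet_Iic, hident]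
  have hABdiff : ℙ (A \ B) = ℙ A * (1 - ℙ A) := by
    have : A \ B = X ⁻¹' Set.Iic x ∩ X' ⁻¹' (Set.Iic x)ᶜ := by
      rw [Set.diff_eq, Set.preimage_compl]
    rw [this, hindep.measure_inter_preimage_eq_mul _ _ measurableSet_Iic
        measurableSet_Iic.compl, Set.preimage_compl, ← hB,
      prob_compl_eq_one_sub hBm, hBA]
  have hBAdiff : ℙ (B \ A) = ℙ A * (1 - ℙ A) := by
    have : B \ A = X ⁻¹' (Set.Iic x)ᶜ ∩ X' ⁻¹' Set.Iic x := by
      rw [Set.diff_eq, Set.preimage_compl, Set.inter_comm]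
    rw [this, hindep.measure_inter_preimage_eq_mul _ _ measurableSet_Iic.compl
        measurableSet_Iic, Set.preimage_compl, ← hA, ← hB,
      prob_compl_eq_one_sub hAm, hBA, mul_comm]
  rw [measureReal_def, measureReal_def, hABdiff, hBAdiff]
  have h1 : ℙ A ≠ ⊤ := (measure_lt_top _ _).ne
  rw [ENNReal.toReal_mul, ENNReal.toReal_sub_of_le prob_le_one (by simp), ENNReal.toReal_one]
  ring
end Main2

/-- Energy-form representation of the CRPS: for i.i.d. integrable real random
variables `X, X'` with common CDF `F`,
`∫ (F(x) − 1{y ≤ x})² dx = E|X − y| − ½ E|X − X'|`. -/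
theorem crps_energy_form (Ω : Type*) [MeasureSpace Ω] [IsProbabilityMeasure (ℙ : Measure Ω)]
    (X X' : Ω → ℝ) (hmeas : Measurable X) (hmeas' : Measurable X')
    (hint : Integrable X) (hint' : Integrable X')
    (hindep : IndepFun X X')
    (hident : Measure.map X ℙ = Measure.map X' ℙ)
    (y : ℝ) :
    ∫ x : ℝ, (((ℙ {ω | X ω ≤ x}).toReal) - (if y ≤ x then (1 : ℝ) else 0)) ^ 2 =
      (∫ ω, |X ω - y|) - (1 / 2) * ∫ ω, |X ω - X' ω| := by
  have key1 : Integrable (fun p : Ω × ℝ =>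
      |(if X p.1 ≤ p.2 then (1:ℝ) else 0) - (if y ≤ p.2 then 1 else 0)|)
      ((ℙ : Measure Ω).prod volume) :=
    intProd (fun _ => y) hmeas (measIndY y) ((hint.sub (integrable_const y)).abs)
  have key2 : Integrable (fun p : Ω × ℝ =>
      |(if X p.1 ≤ p.2 then (1:ℝ) else 0) - (if X' p.1 ≤ p.2 then 1 else 0)|)
      ((ℙ : Measure Ω).prod volume) :=
    intProd X' hmeas (measInd hmeas') ((hint.sub hint').abs)
  have h1int : Integrable (fun x : ℝ =>
      ∫ ω, |(if X ω ≤ x then (1:ℝ) else 0) - (if y ≤ x then 1 else 0)|) volume :=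
    key1.integral_prod_right
  have h2int : Integrable (fun x : ℝ =>
      ∫ ω, |(if X ω ≤ x then (1:ℝ) else 0) - (if X' ω ≤ x then 1 else 0)|) volume :=
    key2.integral_prod_right
  have swap1 : (∫ ω, ∫ x, |(if X ω ≤ x then (1:ℝ) else 0) - (if y ≤ x then 1 else 0)|)
      = ∫ x, ∫ ω, |(if X ω ≤ x then (1:ℝ) else 0) - (if y ≤ x then 1 else 0)| :=
    integral_integral_swap key1
  have swap2 : (∫ ω, ∫ x, |(if X ω ≤ x then (1:ℝ) else 0) - (if X' ω ≤ x then 1 else 0)|)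
      = ∫ x, ∫ ω, |(if X ω ≤ x then (1:ℝ) else 0) - (if X' ω ≤ x then 1 else 0)| :=
    integral_integral_swap key2
  have hset : ∀ x : ℝ, {ω | X ω ≤ x} = X ⁻¹' Set.Iic x := fun _ => rfl
  calc
    ∫ x : ℝ, (((ℙ {ω | X ω ≤ x}).toReal) - (if y ≤ x then (1 : ℝ) else 0)) ^ 2
        = ∫ x : ℝ, ((∫ ω, |(if X ω ≤ x then (1:ℝ) else 0) - (if y ≤ x then 1 else 0)|)
            - (1/2) * ∫ ω, |(if X ω ≤ x then (1:ℝ) else 0) - (if X' ω ≤ x then 1 else 0)|) := by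
        congr 1
        funext x
        rw [hset x, stepC hmeas y x, stepD hmeas hmeas' hindep hident x]
        by_cases h : y ≤ x <;> simp [h] <;> ring
    _ = (∫ x : ℝ, ∫ ω, |(if X ω ≤ x then (1:ℝ) else 0) - (if y ≤ x then 1 else 0)|)
          - (1/2) * ∫ x : ℝ, ∫ ω, |(if X ω ≤ x then (1:ℝ) else 0) - (if X' ω ≤ x then 1 else 0)| := by
        rw [integral_sub h1int (h2int.const_mul _), integral_const_mul]
    _ = (∫ ω, ∫ x, |(if X ω ≤ x then (1:ℝ) else 0) - (if y ≤ x then 1 else 0)|)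
          - (1/2) * ∫ ω, ∫ x, |(if X ω ≤ x then (1:ℝ) else 0) - (if X' ω ≤ x then 1 else 0)| := by
        rw [swap1, swap2]
    _ = (∫ ω, |X ω - y|) - (1 / 2) * ∫ ω, |X ω - X' ω| := by
        simp only [intA]
end
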